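/- Let m > 22 be an integer and α = (m-22)/(m²+m-2). There exists a strictly positive probability vector d_μ ∈ ℝ^{m+2} and an irreducible, aperiodic row-stochastic matrix P ∈ ℝ^{(m+2)×(m+2)} such that, writing D = diag(d_μ) and A_η = D(I - P + η·e·e^T), the matrix A_η has all eigenvalues with strictly positive real part if and only if η ∈ (0, α) ∪ (3α, ∞). -/

import Mathlib

open Matrix Complex

private lemma hurwitz1 (A B C : ℝ) (hA : 0 < A) (hC : 0 < C) (hABC : C < A * B)
    (z : ℂ) (hz : z ^ 3 + A * z ^ 2 + B * z + C = 0) : z.re < 0 := by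
  have hB : 0 < B := by nlinarith
  set x := z.re with hx
  set y := z.im with hy
  have hzeq : z = (x : ℂ) + (y : ℂ) * I := (Complex.re_add_im z).symm
  rw [hzeq] at hz
  have h1 := congrArg Complex.re hz
  have h2 := congrArg Complex.im hz
  simp only [Complex.add_re, Complex.add_im, Complex.mul_re, Complex.mul_im,
    Complex.ofReal_re, Complex.ofReal_im, Complex.I_re, Complex.I_im,
    Complex.zero_re, Complex.zero_im, pow_succ, pow_zero, one_mul] at h1 h2
  ring_nf at h1 h2
  by_contra hcon
  push_neg at hcon
  rcases eq_or_ne y 0 with hy0 | hy0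
  · rw [hy0] at h1
    nlinarith [pow_nonneg hcon 3, sq_nonneg x]
  · have h3 : y * (x * A * 2 + x ^ 2 * 3 + B - y ^ 2) = 0 := by linear_combination h2
    have hq : x * A * 2 + x ^ 2 * 3 + B - y ^ 2 = 0 :=
      (mul_eq_zero.mp h3).resolve_left hy0
    have key : 8 * x ^ 3 + 8 * A * x ^ 2 + 2 * (A ^ 2 + B) * x + (A * B - C) = 0 := by
      linear_combination (-1) * h1 + (3 * x + A) * hq
    nlinarith [mul_nonneg (mul_nonneg hcon hcon) hcon,
      mul_nonneg (mul_nonneg hcon hcon) hA.le, mul_nonneg hcon hB.le,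
      mul_nonneg hcon (mul_nonneg hA.le hA.le)]

private lemma hurwitz2 (A B C : ℝ) (hA : 0 < A) (hB : 0 < B) (hC : 0 < C)
    (hABC : A * B ≤ C) :
    ∃ z : ℂ, z ^ 3 + A * z ^ 2 + B * z + C = 0 ∧ 0 ≤ z.re := by
  have hT : (1 : ℝ) ≤ 1 + A + B + C := by nlinarith
  have hfneg : (fun x : ℝ => x ^ 3 + A * x ^ 2 + B * x + C) (-(1 + A + B + C)) < 0 := by
    simp only
    nlinarith [sq_nonneg (1 + A + B + C), hT]
  have hfpos : (0:ℝ) < (fun x : ℝ => x ^ 3 + A * x ^ 2 + B * x + C) 0 := by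
    simp only; nlinarith
  have hcont : ContinuousOn (fun x : ℝ => x ^ 3 + A * x ^ 2 + B * x + C)
      (Set.Icc (-(1 + A + B + C)) 0) := by fun_prop
  obtain ⟨r, hrmem, hr⟩ := intermediate_value_Icc
    (by nlinarith : -(1 + A + B + C) ≤ (0:ℝ)) hcont ⟨hfneg.le, hfpos.le⟩
  simp only at hr
  have hrne : r ≠ 0 := by
    intro h; rw [h] at hr; nlinarith
  have hrneg : r < 0 := lt_of_le_of_ne hrmem.2 hrne
  have hv0 : 0 < B + A * r + r ^ 2 := by nlinarith [hr]
  have hule : A + r ≤ 0 := by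
    by_contra h
    push_neg at h
    have hid : A * B - C = (A + r) * (B + r ^ 2) := by linear_combination (-1) * hr
    nlinarith [sq_nonneg r]
  have hdisc : (A + r) ^ 2 < 4 * (B + A * r + r ^ 2) := by
    by_contra h
    push_neg at h
    have hw2 : Real.sqrt ((A + r) ^ 2 - 4 * (B + A * r + r ^ 2)) ^ 2
        = (A + r) ^ 2 - 4 * (B + A * r + r ^ 2) := Real.sq_sqrt (by linarith)
    have hwnn : 0 ≤ Real.sqrt ((A + r) ^ 2 - 4 * (B + A * r + r ^ 2)) := Real.sqrt_nonneg _
    set w := Real.sqrt ((A + r) ^ 2 - 4 * (B + A * r + r ^ 2)) with hwdef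
    clear_value w
    have hxpnn : 0 ≤ (-(A + r) + w) / 2 := by nlinarith
    have hquad : ((-(A + r) + w) / 2) ^ 2 + (A + r) * ((-(A + r) + w) / 2)
        + (B + A * r + r ^ 2) = 0 := by
      linear_combination hw2 / 4
    set xp := (-(A + r) + w) / 2 with hxpdef
    clear_value xp
    have hpxp : xp ^ 3 + A * xp ^ 2 + B * xp + C = 0 := by
      linear_combination (xp - r) * hquad + hr
    nlinarith [mul_nonneg (mul_nonneg hxpnn hxpnn) hxpnn,
      mul_nonneg (mul_nonneg hxpnn hxpnn) hA.le, mul_nonneg hxpnn hB.le]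
  have hom2 : Real.sqrt ((B + A * r + r ^ 2) - (A + r) ^ 2 / 4) ^ 2
      = (B + A * r + r ^ 2) - (A + r) ^ 2 / 4 := Real.sq_sqrt (by nlinarith)
  set om := Real.sqrt ((B + A * r + r ^ 2) - (A + r) ^ 2 / 4) with homdef
  clear_value om
  have hom2C : (om : ℂ) ^ 2 = ((B : ℂ) + A * r + (r : ℂ) ^ 2) - ((A : ℂ) + r) ^ 2 / 4 := by
    have := congrArg Complex.ofReal hom2
    push_cast at this
    exact this
  refine ⟨((-(A + r) / 2 : ℝ) : ℂ) + (om : ℝ) * I, ?_, ?_⟩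
  · have hz0 : ((-(A + r) / 2 : ℝ) : ℂ) = -((A : ℂ) + (r : ℂ)) / 2 := by push_cast; ring
    rw [hz0]
    have hrC : (r : ℂ) ^ 3 + (A : ℂ) * (r : ℂ) ^ 2 + (B : ℂ) * r + (C : ℂ) = 0 := by
      exact_mod_cast congrArg Complex.ofReal hr
    have hquad : (-((A : ℂ) + r) / 2 + (om : ℝ) * I) ^ 2
        + ((A : ℂ) + r) * (-((A : ℂ) + r) / 2 + (om : ℝ) * I)
        + ((B : ℂ) + A * r + (r : ℂ) ^ 2) = 0 := by
      linear_combination ((om : ℂ) ^ 2) * Complex.I_sq - hom2C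
    linear_combination ((-((A : ℂ) + r) / 2 + (om : ℝ) * I) - (r : ℂ)) * hquad + hrC
  · simp only [Complex.add_re, Complex.ofReal_re, Complex.mul_re, Complex.ofReal_im,
      Complex.I_re, Complex.I_im]
    nlinarith

private def bIdx (m : ℕ) : Fin (m + 2) := ⟨m, by omega⟩
private def cIdx (m : ℕ) : Fin (m + 2) := ⟨m + 1, by omega⟩

private noncomputable def Pmat (m : ℕ) (s : ℝ) : Matrix (Fin (m + 2)) (Fin (m + 2)) ℝ :=
  Matrix.of fun i j =>
    if i.val < m then (if j = bIdx m then 1 else 0)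
    else if i.val = m then (if j = cIdx m then 1 else 0)
    else if j = cIdx m then 1 - s else if j = bIdx m then 0 else s / m

private noncomputable def dvec (m : ℕ) (al rc : ℝ) : Fin (m + 2) → ℝ :=
  fun i => if i = cIdx m then rc else al

private lemma sum_peel {R : Type*} [AddCommMonoid R] (m : ℕ) (f : Fin (m + 2) → R) :
    ∑ j, f j = (∑ j : Fin m, f (Fin.castLE (by omega) j)) + f (bIdx m) + f (cIdx m) := by
  rw [Fin.sum_univ_castSucc, Fin.sum_univ_castSucc]
  rfl

private lemma entry_eq (m : ℕ) (al rc s η : ℝ) (i j : Fin (m + 2)) :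
    (Matrix.diagonal (dvec m al rc) *
      (1 - Pmat m s + η • (Matrix.of (fun _ _ => (1 : ℝ)) : Matrix (Fin (m+2)) (Fin (m+2)) ℝ))) i j
      = dvec m al rc i * ((if i = j then 1 else 0) - Pmat m s i j + η) := by
  rw [Matrix.diagonal_mul]
  simp [Matrix.add_apply, Matrix.sub_apply, Matrix.smul_apply, Matrix.one_apply,
    Matrix.of_apply, smul_eq_mul, mul_one]

private lemma mulvec_entry (m : ℕ) (al rc s η : ℝ) (x : Fin (m + 2) → ℂ) (i : Fin (m + 2)) :
    (((Matrix.diagonal (dvec m al rc) *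
      (1 - Pmat m s + η • Matrix.of (fun _ _ => (1 : ℝ)))).map Complex.ofReal).mulVec x) i
      = ((dvec m al rc i : ℝ) : ℂ) * (x i - (∑ j, ((Pmat m s i j : ℝ) : ℂ) * x j)
        + (η : ℂ) * (∑ j, x j)) := by
  simp only [Matrix.mulVec, dotProduct, Matrix.map_apply]
  simp only [entry_eq]
  have hterm : ∀ j, ((dvec m al rc i * ((if i = j then 1 else 0) - Pmat m s i j + η) : ℝ) : ℂ)
      * x j
      = (((dvec m al rc i : ℝ) : ℂ) * (if i = j then x j else 0)
          - ((dvec m al rc i : ℝ) : ℂ) * (((Pmat m s i j : ℝ) : ℂ) * x j))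
          + ((dvec m al rc i : ℝ) : ℂ) * ((η : ℂ) * x j) := by
    intro j
    split_ifs with hij
    · push_cast; ring
    · push_cast; ring
  rw [Finset.sum_congr rfl fun j _ => hterm j]
  rw [Finset.sum_add_distrib, Finset.sum_sub_distrib, ← Finset.mul_sum, ← Finset.mul_sum,
    ← Finset.mul_sum, Finset.sum_ite_eq, if_pos (Finset.mem_univ i)]
  rw [← Finset.mul_sum]
  ring

private lemma dvec_a (m : ℕ) (al rc : ℝ) (i : Fin (m + 2)) (hi : i.val ≤ m) :
    dvec m al rc i = al := by
  rw [dvec, if_neg]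
  intro h
  rw [h] at hi
  simp [cIdx] at hi

private lemma dvec_c (m : ℕ) (al rc : ℝ) : dvec m al rc (cIdx m) = rc := by
  rw [dvec, if_pos rfl]

private lemma psum_a (m : ℕ) (s : ℝ) (x : Fin (m + 2) → ℂ) (i : Fin (m + 2)) (hi : i.val < m) :
    ∑ j, ((Pmat m s i j : ℝ) : ℂ) * x j = x (bIdx m) := by
  have hterm : ∀ j, ((Pmat m s i j : ℝ) : ℂ) * x j = if j = bIdx m then x j else 0 := by
    intro j
    simp only [Pmat, Matrix.of_apply, if_pos hi]
    split_ifs with h <;> simp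
  rw [Finset.sum_congr rfl fun j _ => hterm j, Finset.sum_ite_eq', if_pos (Finset.mem_univ _)]

private lemma psum_b (m : ℕ) (s : ℝ) (x : Fin (m + 2) → ℂ) (i : Fin (m + 2))
    (hi : i.val = m) :
    ∑ j, ((Pmat m s i j : ℝ) : ℂ) * x j = x (cIdx m) := by
  have hterm : ∀ j, ((Pmat m s i j : ℝ) : ℂ) * x j = if j = cIdx m then x j else 0 := by
    intro j
    simp only [Pmat, Matrix.of_apply, if_neg (by omega : ¬ i.val < m), if_pos hi]
    split_ifs with h <;> simp
  rw [Finset.sum_congr rfl fun j _ => hterm j, Finset.sum_ite_eq', if_pos (Finset.mem_univ _)]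

private lemma psum_c (m : ℕ) (s : ℝ) (x : Fin (m + 2) → ℂ) :
    ∑ j, ((Pmat m s (cIdx m) j : ℝ) : ℂ) * x j
      = ((1 - s : ℝ) : ℂ) * x (cIdx m)
        + ((s / m : ℝ) : ℂ) * ∑ j : Fin m, x (Fin.castLE (by omega) j) := by
  rw [sum_peel m (fun j => ((Pmat m s (cIdx m) j : ℝ) : ℂ) * x j)]
  have hb : ((Pmat m s (cIdx m) (bIdx m) : ℝ) : ℂ) = 0 := by
    simp only [Pmat, Matrix.of_apply, cIdx, bIdx]
    rw [if_neg (by simp), if_neg (by simp), if_neg (by simp [Fin.ext_iff])]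
    simp
  have hc : ((Pmat m s (cIdx m) (cIdx m) : ℝ) : ℂ) = ((1 - s : ℝ) : ℂ) := by
    simp only [Pmat, Matrix.of_apply, cIdx]
    rw [if_neg (by simp), if_neg (by simp)]
    simp
  have ha : ∀ j : Fin m, ((Pmat m s (cIdx m) (Fin.castLE (by omega : m ≤ m + 2) j) : ℝ) : ℂ)
      = ((s / m : ℝ) : ℂ) := by
    intro j
    simp only [Pmat, Matrix.of_apply]
    have hj := j.isLt
    rw [if_neg (by simp [cIdx]), if_neg (by simp [cIdx]),
      if_neg (by simp [Fin.ext_iff, Fin.castLE, cIdx]; omega),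
      if_neg (by simp [Fin.ext_iff, Fin.castLE, bIdx]; omega)]
  rw [hb, hc]
  rw [Finset.sum_congr rfl fun j _ => by rw [ha j]]
  rw [← Finset.mul_sum]
  ring

private noncomputable def Bmat (m : ℕ) (al rc η : ℝ) : Matrix (Fin 3) (Fin 3) ℂ :=
  !![(al : ℂ) * (1 + (η : ℂ) * m), (al : ℂ) * ((η : ℂ) - 1), (al : ℂ) * η;
     (al : ℂ) * ((η : ℂ) * m), (al : ℂ) * (1 + (η : ℂ)), (al : ℂ) * ((η : ℂ) - 1);
     (rc : ℂ) * ((η : ℂ) * m) - al, (rc : ℂ) * η, (al : ℂ) + (rc : ℂ) * η]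

private lemma detB (m : ℕ) (al rc η : ℝ) (lam : ℂ)
    (hsum : al * m + al + rc = 1) (hkey : ((m : ℝ) + 2) * (rc + 2 * al) = 24) :
    (lam • (1 : Matrix (Fin 3) (Fin 3) ℂ) - Bmat m al rc η).det
      = lam ^ 3 - ((3 * al + η : ℝ) : ℂ) * lam ^ 2 + ((3 * al ^ 2 + 3 * al * η : ℝ) : ℂ) * lam
        - ((24 * al ^ 2 * η : ℝ) : ℂ) := by
  have hsumC : (al : ℂ) * m + al + rc = 1 := by
    have := congrArg Complex.ofReal hsum
    push_cast at this
    exact this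
  have hkeyC : ((m : ℂ) + 2) * ((rc : ℂ) + 2 * al) = 24 := by
    have := congrArg Complex.ofReal hkey
    push_cast at this
    exact this
  rw [Matrix.det_fin_three]
  simp only [Bmat, Matrix.sub_apply, Matrix.smul_apply, Matrix.one_apply, smul_eq_mul,
    Matrix.cons_val', Matrix.cons_val_zero, Matrix.cons_val_one, Matrix.head_cons,
    Matrix.empty_val', Matrix.cons_val_fin_one, Matrix.head_fin_const, Matrix.of_apply,
    Matrix.cons_val_two, Matrix.tail_cons]
  norm_num
  push_cast
  linear_combination (3 * (al : ℂ) * (η : ℂ) * lam - (η : ℂ) * lam ^ 2) * hsumC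
    + (-(η : ℂ) * (al : ℂ) ^ 2) * hkeyC

private lemma eig_char (m : ℕ) (hm : 22 < m) (al rc s η : ℝ) (hrc : rc ≠ 0)
    (hrs : rc * s = al)
    (hsum : al * m + al + rc = 1) (hkey : ((m : ℝ) + 2) * (rc + 2 * al) = 24)
    (lam : ℂ) (x : Fin (m + 2) → ℂ) (hx : x ≠ 0)
    (heig : ((Matrix.diagonal (dvec m al rc) *
      (1 - Pmat m s + η • Matrix.of (fun _ _ => (1 : ℝ)))).map Complex.ofReal).mulVec x
      = lam • x) :
    lam = (al : ℂ) ∨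
      lam ^ 3 - ((3 * al + η : ℝ) : ℂ) * lam ^ 2 + ((3 * al ^ 2 + 3 * al * η : ℝ) : ℂ) * lam
        - ((24 * al ^ 2 * η : ℝ) : ℂ) = 0 := by
  by_cases hlam : lam = (al : ℂ)
  · exact Or.inl hlam
  right
  have hrow : ∀ i, ((dvec m al rc i : ℝ) : ℂ) * (x i - (∑ j, ((Pmat m s i j : ℝ) : ℂ) * x j)
      + (η : ℂ) * (∑ j, x j)) = lam * x i := by
    intro i
    rw [← mulvec_entry m al rc s η x i, heig]
    simp
  set S := ∑ j, x j with hSdef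
  set Sa := ∑ j : Fin m, x (Fin.castLE (by omega) j) with hSadef
  have hS : S = Sa + x (bIdx m) + x (cIdx m) := sum_peel m x
  have eqa : ∀ i : Fin (m + 2), i.val < m →
      (al : ℂ) * (x i - x (bIdx m) + (η : ℂ) * S) = lam * x i := by
    intro i hi
    have h := hrow i
    rw [psum_a m s x i hi, dvec_a m al rc i (le_of_lt hi)] at h
    exact h
  have eqb : (al : ℂ) * (x (bIdx m) - x (cIdx m) + (η : ℂ) * S) = lam * x (bIdx m) := by
    have h := hrow (bIdx m)
    rw [psum_b m s x (bIdx m) rfl, dvec_a m al rc (bIdx m) (le_refl m)] at h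
    exact h
  have eqc : ((rc : ℝ) : ℂ) * (x (cIdx m)
      - (((1 - s : ℝ) : ℂ) * x (cIdx m) + ((s / m : ℝ) : ℂ) * Sa)
      + (η : ℂ) * S) = lam * x (cIdx m) := by
    have h := hrow (cIdx m)
    rw [psum_c m s x, dvec_c m al rc] at h
    exact h
  -- all a-coordinates are equal
  have ha0 : ((⟨0, by omega⟩ : Fin (m + 2)) : Fin (m + 2)).val < m := by simp; omega
  set a0 : Fin (m + 2) := ⟨0, by omega⟩ with ha0def
  have hcancel : ((al : ℂ) - lam) ≠ 0 := sub_ne_zero.mpr fun h => hlam h.symm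
  have hall : ∀ i : Fin (m + 2), i.val < m → x i = x a0 := by
    intro i hi
    have h1 := eqa i hi
    have h2 := eqa a0 ha0
    have : ((al : ℂ) - lam) * x i = ((al : ℂ) - lam) * x a0 := by
      linear_combination h1 - h2
    exact mul_left_cancel₀ hcancel this
  have hSa : Sa = (m : ℂ) * x a0 := by
    have h1 : Sa = ∑ _j : Fin m, x a0 :=
      Finset.sum_congr rfl fun j _ => hall _ (by simpa using j.isLt)
    rw [h1, Finset.sum_const, Finset.card_univ, Fintype.card_fin, nsmul_eq_mul]
  set y : Fin 3 → ℂ := ![x a0, x (bIdx m), x (cIdx m)] with hydef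
  have hy : y ≠ 0 := by
    intro h0
    apply hx
    funext i
    have h00 : x a0 = 0 := by
      have := congrFun h0 0; simpa [hydef] using this
    have h01 : x (bIdx m) = 0 := by
      have := congrFun h0 1; simpa [hydef] using this
    have h02 : x (cIdx m) = 0 := by
      have := congrFun h0 2; simpa [hydef] using this
    rcases lt_or_ge i.val m with hi | hi
    · rw [hall i hi]; exact h00
    · have : i.val = m ∨ i.val = m + 1 := by omega
      rcases this with h | h
      · have : i = bIdx m := by exact Fin.ext h
        rw [this]; exact h01
      · have : i = cIdx m := by exact Fin.ext h
        rw [this]; exact h02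
  have hm0 : (m : ℝ) ≠ 0 := Nat.cast_ne_zero.mpr (by omega)
  have hcoefR : rc * (s / (m : ℝ) * m) = al := by
    field_simp
    linarith [hrs]
  have hcoefC : (rc : ℂ) * ((s : ℂ) / (m : ℂ) * (m : ℂ)) = (al : ℂ) := by
    have h2 := congrArg Complex.ofReal hcoefR
    push_cast at h2 ⊢
    exact h2
  have hrsC : (rc : ℂ) * (s : ℂ) = (al : ℂ) := by exact_mod_cast congrArg Complex.ofReal hrs
  have hker : (lam • (1 : Matrix (Fin 3) (Fin 3) ℂ) - Bmat m al rc η).mulVec y = 0 := by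
    funext k
    rw [hS, hSa] at eqa eqb eqc
    fin_cases k
    · simp only [Matrix.mulVec, dotProduct, Fin.sum_univ_three, Bmat,
        Matrix.sub_apply, Matrix.smul_apply, Matrix.one_apply, smul_eq_mul, hydef,
        Matrix.cons_val', Matrix.cons_val_zero, Matrix.cons_val_one, Matrix.head_cons,
        Matrix.empty_val', Matrix.cons_val_fin_one, Matrix.of_apply, Matrix.cons_val_two,
        Matrix.tail_cons, Pi.zero_apply]
      norm_num [Fin.ext_iff]
      linear_combination (-1 : ℂ) * eqa a0 ha0
    · simp only [Matrix.mulVec, dotProduct, Fin.sum_univ_three, Bmat,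
        Matrix.sub_apply, Matrix.smul_apply, Matrix.one_apply, smul_eq_mul, hydef,
        Matrix.cons_val', Matrix.cons_val_zero, Matrix.cons_val_one, Matrix.head_cons,
        Matrix.empty_val', Matrix.cons_val_fin_one, Matrix.of_apply, Matrix.cons_val_two,
        Matrix.tail_cons, Pi.zero_apply]
      norm_num [Fin.ext_iff]
      linear_combination (-1 : ℂ) * eqb
    · simp only [Matrix.mulVec, dotProduct, Fin.sum_univ_three, Bmat,
        Matrix.sub_apply, Matrix.smul_apply, Matrix.one_apply, smul_eq_mul, hydef,
        Matrix.cons_val', Matrix.cons_val_zero, Matrix.cons_val_one, Matrix.head_cons,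
        Matrix.empty_val', Matrix.cons_val_fin_one, Matrix.of_apply, Matrix.cons_val_two,
        Matrix.tail_cons, Pi.zero_apply]
      norm_num [Fin.ext_iff]
      push_cast at eqc ⊢
      linear_combination (-1 : ℂ) * eqc + x (cIdx m) * hrsC - x a0 * hcoefC
  have hdet : (lam • (1 : Matrix (Fin 3) (Fin 3) ℂ) - Bmat m al rc η).det = 0 :=
    (Matrix.exists_mulVec_eq_zero_iff).mp ⟨y, hy, hker⟩
  rw [detB m al rc η lam hsum hkey] at hdet
  exact hdet

private lemma eig_exists (m : ℕ) (hm : 22 < m) (al rc s η : ℝ)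
    (hrs : rc * s = al)
    (hsum : al * m + al + rc = 1) (hkey : ((m : ℝ) + 2) * (rc + 2 * al) = 24)
    (lam : ℂ)
    (hcubic : lam ^ 3 - ((3 * al + η : ℝ) : ℂ) * lam ^ 2
      + ((3 * al ^ 2 + 3 * al * η : ℝ) : ℂ) * lam - ((24 * al ^ 2 * η : ℝ) : ℂ) = 0) :
    ∃ x : Fin (m + 2) → ℂ, x ≠ 0 ∧
      ((Matrix.diagonal (dvec m al rc) *
        (1 - Pmat m s + η • Matrix.of (fun _ _ => (1 : ℝ)))).map Complex.ofReal).mulVec x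
        = lam • x := by
  have hdet : (lam • (1 : Matrix (Fin 3) (Fin 3) ℂ) - Bmat m al rc η).det = 0 := by
    rw [detB m al rc η lam hsum hkey]; exact hcubic
  obtain ⟨y, hy, hker⟩ := (Matrix.exists_mulVec_eq_zero_iff).mpr hdet
  set x : Fin (m + 2) → ℂ :=
    fun i => if i.val < m then y 0 else if i.val = m then y 1 else y 2 with hxdef
  have hm0 : (m : ℝ) ≠ 0 := Nat.cast_ne_zero.mpr (by omega)
  have hcoefR : rc * (s / (m : ℝ) * m) = al := by
    field_simp
    linarith [hrs]
  have hcoefC : (rc : ℂ) * ((s : ℂ) / (m : ℂ) * (m : ℂ)) = (al : ℂ) := by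
    have h2 := congrArg Complex.ofReal hcoefR
    push_cast at h2 ⊢
    exact h2
  have hrsC : (rc : ℂ) * (s : ℂ) = (al : ℂ) := by exact_mod_cast congrArg Complex.ofReal hrs
  have hxa : ∀ i : Fin (m + 2), i.val < m → x i = y 0 := by
    intro i hi; rw [hxdef]; simp only [if_pos hi]
  have hxb : x (bIdx m) = y 1 := by
    rw [hxdef]; simp only [bIdx]
    rw [if_neg (by simp), if_pos (by simp)]
  have hxc : x (cIdx m) = y 2 := by
    rw [hxdef]; beta_reduce
    rw [if_neg (by simp [cIdx]), if_neg (by simp [cIdx])]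
  have hSa : (∑ j : Fin m, x (Fin.castLE (by omega) j)) = (m : ℂ) * y 0 := by
    have h1 : (∑ j : Fin m, x (Fin.castLE (by omega : m ≤ m + 2) j)) = ∑ _j : Fin m, y 0 :=
      Finset.sum_congr rfl fun j _ => hxa _ (by simpa using j.isLt)
    rw [h1, Finset.sum_const, Finset.card_univ, Fintype.card_fin, nsmul_eq_mul]
  have hS : (∑ j, x j) = (m : ℂ) * y 0 + y 1 + y 2 := by
    rw [sum_peel m x, hSa, hxb, hxc]
  -- the three kernel equations
  have hk0 := congrFun hker 0
  have hk1 := congrFun hker 1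
  have hk2 := congrFun hker 2
  simp only [Matrix.mulVec, dotProduct, Fin.sum_univ_three, Bmat,
    Matrix.sub_apply, Matrix.smul_apply, Matrix.one_apply, smul_eq_mul,
    Matrix.cons_val', Matrix.cons_val_zero, Matrix.cons_val_one, Matrix.head_cons,
    Matrix.empty_val', Matrix.cons_val_fin_one, Matrix.of_apply, Matrix.cons_val_two,
    Matrix.tail_cons, Pi.zero_apply] at hk0 hk1 hk2
  norm_num [Fin.ext_iff] at hk0 hk1 hk2
  refine ⟨x, ?_, ?_⟩
  · intro h0
    apply hy
    funext k
    have h00 : y 0 = 0 := by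
      rw [← hxa ⟨0, by omega⟩ (by simp; omega)]; rw [h0]; rfl
    have h01 : y 1 = 0 := by rw [← hxb, h0]; rfl
    have h02 : y 2 = 0 := by rw [← hxc, h0]; rfl
    fin_cases k
    · exact h00
    · exact h01
    · exact h02
  · funext i
    rw [mulvec_entry m al rc s η x i]
    have hsmul : (lam • x) i = lam * x i := rfl
    rw [hsmul]
    rcases lt_or_ge i.val m with hi | hi
    · rw [psum_a m s x i hi, dvec_a m al rc i (le_of_lt hi), hxa i hi, hxb, hS]
      push_cast
      linear_combination (-1 : ℂ) * hk0
    · have : i.val = m ∨ i.val = m + 1 := by omega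
      rcases this with h | h
      · have hib : i = bIdx m := Fin.ext h
        rw [hib, psum_b m s x (bIdx m) rfl, dvec_a m al rc (bIdx m) (le_refl m), hxb, hxc, hS]
        push_cast
        linear_combination (-1 : ℂ) * hk1
      · have hic : i = cIdx m := Fin.ext h
        rw [hic, psum_c m s x, dvec_c m al rc, hxc, hSa, hS]
        push_cast
        linear_combination (-1 : ℂ) * hk2 + y 2 * hrsC - y 0 * hcoefC

private lemma pmat_nonneg (m : ℕ) (s : ℝ) (hs0 : 0 ≤ s) (hs1 : s ≤ 1) (i j : Fin (m + 2)) :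
    0 ≤ Pmat m s i j := by
  have hm2 : (0:ℝ) ≤ s / m := by positivity
  rw [Pmat, Matrix.of_apply]
  split_ifs <;> linarith

private lemma pmat_rowsum (m : ℕ) (s : ℝ) (hm : 0 < m) (i : Fin (m + 2)) :
    ∑ j, Pmat m s i j = 1 := by
  have hm0 : (m : ℝ) ≠ 0 := Nat.cast_ne_zero.mpr (by omega)
  rcases lt_or_ge i.val m with hi | hi
  · have hterm : ∀ j, Pmat m s i j = if j = bIdx m then 1 else 0 := by
      intro j; rw [Pmat, Matrix.of_apply, if_pos hi]
    rw [Finset.sum_congr rfl fun j _ => hterm j, Finset.sum_ite_eq',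
      if_pos (Finset.mem_univ _)]
  · have : i.val = m ∨ i.val = m + 1 := by omega
    rcases this with h | h
    · have hterm : ∀ j, Pmat m s i j = if j = cIdx m then 1 else 0 := by
        intro j; rw [Pmat, Matrix.of_apply, if_neg (by omega), if_pos h]
      rw [Finset.sum_congr rfl fun j _ => hterm j, Finset.sum_ite_eq',
        if_pos (Finset.mem_univ _)]
    · have hic : i = cIdx m := Fin.ext h
      subst hic
      rw [sum_peel m (fun j => Pmat m s (cIdx m) j)]
      have hb : Pmat m s (cIdx m) (bIdx m) = 0 := by
        rw [Pmat, Matrix.of_apply]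
        rw [if_neg (by simp [cIdx]), if_neg (by simp [cIdx]),
          if_neg (by simp [Fin.ext_iff, bIdx, cIdx])]
        simp
      have hc : Pmat m s (cIdx m) (cIdx m) = 1 - s := by
        rw [Pmat, Matrix.of_apply]
        rw [if_neg (by simp [cIdx]), if_neg (by simp [cIdx]), if_pos rfl]
      have ha : ∀ j : Fin m, Pmat m s (cIdx m) (Fin.castLE (by omega : m ≤ m + 2) j)
          = s / m := by
        intro j
        rw [Pmat, Matrix.of_apply]
        rw [if_neg (by simp [cIdx]), if_neg (by simp [cIdx]),
          if_neg (by simp [Fin.ext_iff, Fin.castLE, cIdx]; omega),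
          if_neg (by simp [Fin.ext_iff, Fin.castLE, bIdx]; omega)]
      rw [hb, hc, Finset.sum_congr rfl fun j _ => ha j, Finset.sum_const,
        Finset.card_univ, Fintype.card_fin, nsmul_eq_mul]
      field_simp
      ring

private lemma matmul_nonneg {n : ℕ} (A B : Matrix (Fin n) (Fin n) ℝ)
    (hA : ∀ i j, 0 ≤ A i j) (hB : ∀ i j, 0 ≤ B i j) (i j : Fin n) : 0 ≤ (A * B) i j := by
  rw [Matrix.mul_apply]
  exact Finset.sum_nonneg fun k _ => mul_nonneg (hA i k) (hB k j)

private lemma matmul_pos {n : ℕ} (A B : Matrix (Fin n) (Fin n) ℝ)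
    (hA : ∀ i j, 0 ≤ A i j) (hB : ∀ i j, 0 ≤ B i j) (i j k : Fin n)
    (hik : 0 < A i k) (hkj : 0 < B k j) : 0 < (A * B) i j := by
  rw [Matrix.mul_apply]
  have h1 : 0 < A i k * B k j := mul_pos hik hkj
  refine lt_of_lt_of_le h1 ?_
  exact Finset.single_le_sum (fun l _ => mul_nonneg (hA i l) (hB l j)) (Finset.mem_univ k)

private lemma pmat_ab (m : ℕ) (s : ℝ) (i : Fin (m + 2)) (hi : i.val < m) :
    Pmat m s i (bIdx m) = 1 := by
  rw [Pmat, Matrix.of_apply, if_pos hi, if_pos rfl]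

private lemma pmat_bc (m : ℕ) (s : ℝ) : Pmat m s (bIdx m) (cIdx m) = 1 := by
  rw [Pmat, Matrix.of_apply, if_neg (by simp [bIdx]), if_pos (by simp [bIdx]), if_pos rfl]

private lemma pmat_cc (m : ℕ) (s : ℝ) : Pmat m s (cIdx m) (cIdx m) = 1 - s := by
  rw [Pmat, Matrix.of_apply]
  rw [if_neg (by simp [cIdx]), if_neg (by simp [cIdx]), if_pos rfl]

private lemma pmat_ca (m : ℕ) (s : ℝ) (j : Fin (m + 2)) (hj : j.val < m) :
    Pmat m s (cIdx m) j = s / m := by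
  rw [Pmat, Matrix.of_apply]
  rw [if_neg (by simp [cIdx]), if_neg (by simp [cIdx]),
    if_neg (by simp [Fin.ext_iff, cIdx]; omega),
    if_neg (by simp [Fin.ext_iff, bIdx]; omega)]

private lemma pmat_sq_pos (m : ℕ) (s : ℝ) (hm : 0 < m) (hs0 : 0 < s) (hs1 : s < 1) :
    (∀ i, 0 < (Pmat m s * Pmat m s) i (cIdx m)) ∧
      (∀ j, 0 < (Pmat m s * Pmat m s) (cIdx m) j) := by
  have hnn := pmat_nonneg m s hs0.le hs1.le
  have hsm : 0 < s / (m : ℝ) := by positivity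
  have hcc : 0 < Pmat m s (cIdx m) (cIdx m) := by rw [pmat_cc]; linarith
  constructor
  · intro i
    rcases lt_or_ge i.val m with hi | hi
    · exact matmul_pos _ _ hnn hnn i (cIdx m) (bIdx m)
        (by rw [pmat_ab m s i hi]; norm_num) (by rw [pmat_bc]; norm_num)
    · have : i.val = m ∨ i.val = m + 1 := by omega
      rcases this with h | h
      · have hib : i = bIdx m := Fin.ext h
        subst hib
        exact matmul_pos _ _ hnn hnn _ (cIdx m) (cIdx m)
          (by rw [pmat_bc]; norm_num) hcc
      · have hic : i = cIdx m := Fin.ext h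
        subst hic
        exact matmul_pos _ _ hnn hnn _ (cIdx m) (cIdx m) hcc hcc
  · intro j
    have ha0 : ((⟨0, by omega⟩ : Fin (m + 2))).val < m := by simp; omega
    rcases lt_or_ge j.val m with hj | hj
    · exact matmul_pos _ _ hnn hnn (cIdx m) j (cIdx m) hcc
        (by rw [pmat_ca m s j hj]; exact hsm)
    · have : j.val = m ∨ j.val = m + 1 := by omega
      rcases this with h | h
      · have hjb : j = bIdx m := Fin.ext h
        subst hjb
        exact matmul_pos _ _ hnn hnn (cIdx m) _ ⟨0, by omega⟩
          (by rw [pmat_ca m s _ ha0]; exact hsm)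
          (by rw [pmat_ab m s _ ha0]; norm_num)
      · have hjc : j = cIdx m := Fin.ext h
        subst hjc
        exact matmul_pos _ _ hnn hnn _ _ (cIdx m) hcc hcc

private lemma pmat_pow4_pos (m : ℕ) (s : ℝ) (hm : 0 < m) (hs0 : 0 < s) (hs1 : s < 1) :
    ∀ i j, 0 < ((Pmat m s) ^ 4) i j := by
  intro i j
  have hnn := pmat_nonneg m s hs0.le hs1.le
  have hsq := pmat_sq_pos m s hm hs0 hs1
  have hsqnn : ∀ i j, 0 ≤ (Pmat m s * Pmat m s) i j := matmul_nonneg _ _ hnn hnn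
  have h4 : (Pmat m s) ^ 4 = (Pmat m s * Pmat m s) * (Pmat m s * Pmat m s) := by
    rw [show (4 : ℕ) = 2 + 2 from rfl, pow_add, pow_two]
  rw [h4]
  exact matmul_pos _ _ hsqnn hsqnn i j (cIdx m) (hsq.1 i) (hsq.2 j)
theorem stmt18 (m : ℕ) (hm : 22 < m) :
    let α : ℝ := ((m : ℝ) - 22) / ((m : ℝ) ^ 2 + m - 2)
    ∃ (d : Fin (m + 2) → ℝ) (P : Matrix (Fin (m + 2)) (Fin (m + 2)) ℝ),
      (∀ i, 0 < d i) ∧ (∑ i, d i = 1) ∧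
      (∀ i j, 0 ≤ P i j) ∧ (∀ i, ∑ j, P i j = 1) ∧
      (∀ i j, ∃ k : ℕ, 0 < (P ^ k) i j) ∧
      (∃ k : ℕ, 0 < k ∧ ∀ i j, 0 < (P ^ k) i j) ∧
      ∀ η : ℝ, 0 < η →
        ((∀ (lam : ℂ) (x : Fin (m + 2) → ℂ), x ≠ 0 →
            ((Matrix.diagonal d *
              (1 - P + η • Matrix.of (fun _ _ => (1 : ℝ)))).map Complex.ofReal).mulVec x
              = lam • x → 0 < lam.re)
          ↔ (η ∈ Set.Ioo 0 α ∪ Set.Ioi (3 * α))) := by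
  intro α
  have hm23 : (23 : ℝ) ≤ (m : ℝ) := by exact_mod_cast hm
  have hD : (0 : ℝ) < (m : ℝ) ^ 2 + m - 2 := by nlinarith
  have hDne : ((m : ℝ) ^ 2 + m - 2) ≠ 0 := ne_of_gt hD
  have hα : α = ((m : ℝ) - 22) / ((m : ℝ) ^ 2 + m - 2) := rfl
  have hαpos : 0 < α := by
    rw [hα]; apply div_pos (by linarith) hD
  set rc : ℝ := 1 - α * m - α with hrcdef
  have hrcval : rc = (22 * m + 20) / ((m : ℝ) ^ 2 + m - 2) := by
    rw [hrcdef, hα]; simp only [div_eq_mul_inv]; linear_combination (-1 : ℝ) * mul_inv_cancel₀ hDne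
  have hrcpos : 0 < rc := by
    rw [hrcval]; apply div_pos (by linarith) hD
  have hrcne : rc ≠ 0 := ne_of_gt hrcpos
  set s : ℝ := α / rc with hsdef
  have hrs : rc * s = α := by rw [hsdef]; field_simp
  have hspos : 0 < s := by rw [hsdef]; exact div_pos hαpos hrcpos
  have hrcsub : α < rc := by
    rw [hrcval, hα, div_lt_div_iff₀ hD hD]
    nlinarith
  have hs1 : s < 1 := by
    rw [hsdef, div_lt_one hrcpos]; exact hrcsub
  have hsum : α * m + α + rc = 1 := by rw [hrcdef]; ring
  have hkey : ((m : ℝ) + 2) * (rc + 2 * α) = 24 := by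
    rw [hrcdef, hα]; simp only [div_eq_mul_inv]
    linear_combination (-((m:ℝ) - 22)) * mul_inv_cancel₀ hDne
  have hmpos : 0 < m := by omega
  refine ⟨dvec m α rc, Pmat m s, ?_, ?_, ?_, ?_, ?_, ?_, ?_⟩
  · -- positivity of d
    intro i
    rw [dvec]
    split_ifs
    · exact hrcpos
    · exact hαpos
  · -- sum of d
    rw [sum_peel m (dvec m α rc)]
    have ha : ∀ j : Fin m, dvec m α rc (Fin.castLE (by omega : m ≤ m + 2) j) = α :=
      fun j => dvec_a m α rc _ (by simpa using j.isLt.le)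
    rw [Finset.sum_congr rfl fun j _ => ha j, Finset.sum_const, Finset.card_univ,
      Fintype.card_fin, nsmul_eq_mul, dvec_a m α rc (bIdx m) (le_refl m), dvec_c]
    linarith [hsum]
  · exact pmat_nonneg m s hspos.le hs1.le
  · exact pmat_rowsum m s hmpos
  · exact fun i j => ⟨4, pmat_pow4_pos m s hmpos hspos hs1 i j⟩
  · exact ⟨4, by norm_num, pmat_pow4_pos m s hmpos hspos hs1⟩
  · intro η hη
    have hA : 0 < 3 * α + η := by linarith
    have hB : 0 < 3 * α ^ 2 + 3 * α * η := by nlinarith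
    have hC : 0 < 24 * α ^ 2 * η := by positivity
    constructor
    · -- stability ⇒ η in the region
      intro hstab
      by_contra hnot
      simp only [Set.mem_union, Set.mem_Ioo, Set.mem_Ioi, not_or, not_and, not_lt] at hnot
      have h1 : α ≤ η := hnot.1 hη
      have h2 : η ≤ 3 * α := hnot.2
      have hABC : (3 * α + η) * (3 * α ^ 2 + 3 * α * η) ≤ 24 * α ^ 2 * η := by
        nlinarith [mul_nonneg (sub_nonneg.mpr h1) (sub_nonneg.mpr h2), hαpos]
      obtain ⟨z, hz, hzre⟩ := hurwitz2 (3 * α + η) (3 * α ^ 2 + 3 * α * η) (24 * α ^ 2 * η)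
        hA hB hC hABC
      have hcubic : (-z) ^ 3 - ((3 * α + η : ℝ) : ℂ) * (-z) ^ 2
          + ((3 * α ^ 2 + 3 * α * η : ℝ) : ℂ) * (-z) - ((24 * α ^ 2 * η : ℝ) : ℂ) = 0 := by
        linear_combination (-1 : ℂ) * hz
      obtain ⟨x, hx, heig⟩ := eig_exists m hm α rc s η hrs hsum hkey (-z) hcubic
      have := hstab (-z) x hx heig
      rw [Complex.neg_re] at this
      linarith
    · -- η in the region ⇒ stability
      intro hmem lam x hx heig
      rcases eig_char m hm α rc s η hrcne hrs hsum hkey lam x hx heig with hl | hcubic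
      · rw [hl, Complex.ofReal_re]; exact hαpos
      · have hABC : 24 * α ^ 2 * η < (3 * α + η) * (3 * α ^ 2 + 3 * α * η) := by
          rcases hmem with h | h
          · obtain ⟨-, h2⟩ := h
            nlinarith [mul_pos (sub_pos.mpr h2) hαpos]
          · rw [Set.mem_Ioi] at h
            nlinarith [mul_pos (sub_pos.mpr h) hαpos]
        have hz : (-lam) ^ 3 + ((3 * α + η : ℝ) : ℂ) * (-lam) ^ 2
            + ((3 * α ^ 2 + 3 * α * η : ℝ) : ℂ) * (-lam) + ((24 * α ^ 2 * η : ℝ) : ℂ) = 0 := by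
          linear_combination (-1 : ℂ) * hcubic
        have hre := hurwitz1 (3 * α + η) (3 * α ^ 2 + 3 * α * η) (24 * α ^ 2 * η)
          hA hC hABC (-lam) hz
        rw [Complex.neg_re] at hre
        linarith
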